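/- Let k | n or n | k, and let 𝒜 = ⟨A,0⟩ be a pair in Σ^n × Z_k with A ≠ 0^n, and 𝒞 = θ(𝒜). Then there is no maximal pair ℬ with 𝒜 ≻ ℬ ≻ 𝒞. In other words, θ never skips over a maximal pair. -/

import Mathlib

namespace Stmt11Aux

theorem lex_iff {α : Type*} [LinearOrder α] :
    ∀ (X Y : List α), X.length = Y.length →
    (List.Lex (· < ·) X Y ↔ ∃ p : ℕ, (∀ u, u < p → X[u]? = Y[u]?) ∧
      ∃ x y : α, X[p]? = some x ∧ Y[p]? = some y ∧ x < y)
  | [], [], _ => by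
      constructor
      · intro h; cases h
      · rintro ⟨p, -, x, y, hx, -⟩; simp at hx
  | [], y :: Y, h => by simp at h
  | x :: X, [], h => by simp at h
  | x :: X, y :: Y, h => by
      have ih := lex_iff X Y (by simpa using h)
      constructor
      · intro hl
        cases hl with
        | cons hXY =>
            obtain ⟨p, hag, x', y', hx', hy', hlt⟩ := ih.1 hXY
            refine ⟨p+1, fun u hu => ?_, x', y', by simpa using hx', by simpa using hy', hlt⟩
            cases u with
            | zero => simp
            | succ u => simpa using hag u (by omega)
        | rel hxy =>
            exact ⟨0, fun u hu => by omega, x, y, by simp, by simp, hxy⟩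
      · rintro ⟨p, hag, x', y', hx', hy', hlt⟩
        cases p with
        | zero =>
            simp only [List.getElem?_cons_zero, Option.some.injEq] at hx' hy'
            subst hx'; subst hy'
            exact List.Lex.rel hlt
        | succ p =>
            have h0 : x = y := by simpa using hag 0 (by omega)
            subst h0
            exact List.Lex.cons (ih.2 ⟨p, fun u hu => by simpa using hag (u+1) (by omega),
              x', y', by simpa using hx', by simpa using hy', hlt⟩)

theorem len_flatrep {α : Type*} (blk : List α) (q : ℕ) :
    (List.replicate q blk).flatten.length = q * blk.length := by
  induction q with
  | zero => simp
  | succ q ih => rw [List.replicate_succ, List.flatten_cons, List.length_append, ih]; ring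

theorem flatrep_getElem {α : Type*} (blk : List α) :
    ∀ (q m t : ℕ), m < q → t < blk.length →
    (List.replicate q blk).flatten[m * blk.length + t]? = blk[t]?
  | 0, m, t, hm, ht => by omega
  | q+1, 0, t, hm, ht => by
      rw [List.replicate_succ, List.flatten_cons, Nat.zero_mul, Nat.zero_add,
        List.getElem?_append_left ht]
  | q+1, m+1, t, hm, ht => by
      rw [List.replicate_succ, List.flatten_cons,
        List.getElem?_append_right (by nlinarith)]
      have he : (m+1) * blk.length + t - blk.length = m * blk.length + t := by
        rw [Nat.add_mul, Nat.one_mul]; omega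
      rw [he]
      exact flatrep_getElem blk q m t (by omega) ht

end Stmt11Aux

/-- Right rotation by `i` of a pair in `Σ^n × ℤ/k`. -/
def rotPair (s k : ℕ) (i : ℕ) (P : List (Fin s) × ZMod k) : List (Fin s) × ZMod k :=
  (P.1.rotate i, P.2 + (i : ZMod k))

/-- The order ≻ : `P ≻ Q` iff (same second component and `P.1 > Q.1` lexicographically)
or `(k-1-P.2) > (k-1-Q.2)`, i.e. `P.2 < Q.2` as residues. -/
def succPair (s k : ℕ) (P Q : List (Fin s) × ZMod k) : Prop :=
  (List.Lex (· < ·) Q.1 P.1 ∧ P.2 = Q.2) ∨ P.2.val < Q.2.val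

/-- A pair is maximal when no rotation of it is ≻-greater than it. -/
def isMaxPair (s k : ℕ) (P : List (Fin s) × ZMod k) : Prop :=
  ∀ i : ℕ, ¬ succPair s k (rotPair s k i P) P

/-- The operator θ on words. -/
def thetaWord (s k : ℕ) (A : List (Fin s)) : List (Fin s) :=
  let n := A.length
  let i := n - (A.reverse.takeWhile (fun a => a.val == 0)).length
  match A[i - 1]? with
  | none => A
  | some a =>
      let j := i + ((n - i) % k)
      let q := n / j
      (List.replicate q (A.take (i-1) ++
          (⟨a.val - 1, Nat.lt_of_le_of_lt (Nat.sub_le _ _) a.isLt⟩ : Fin s) ::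
          List.replicate (j - i)
            (⟨s - 1, Nat.sub_lt (Nat.lt_of_le_of_lt (Nat.zero_le a.val) a.isLt) Nat.one_pos⟩ : Fin s))).flatten
        ++ A.take (n - q * j)

/-- The operator θ on pairs with second component 0. -/
def thetaPair (s k : ℕ) (P : List (Fin s) × ZMod k) : List (Fin s) × ZMod k :=
  (thetaWord s k P.1, 0)

open Stmt11Aux in
/-- θ never skips over a maximal pair: there is no maximal pair strictly ≻-between
`⟨A,0⟩` and `θ⟨A,0⟩`. -/
theorem stmt11 (s n k : ℕ) (hs : 2 ≤ s) (hn : 0 < n) (hk : 0 < k)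
    (hdvd : k ∣ n ∨ n ∣ k)
    (A : List (Fin s)) (hA : A.length = n)
    (hA0 : A ≠ List.replicate n (⟨0, by omega⟩ : Fin s)) :
    ¬ ∃ B : List (Fin s) × ZMod k, B.1.length = n ∧ isMaxPair s k B ∧
        succPair s k (A, (0 : ZMod k)) B ∧ succPair s k B (thetaPair s k (A, 0)) := by
  haveI : NeZero k := ⟨by omega⟩
  rintro ⟨B, hBlen, hmax, hAB, hBC⟩
  -- unpack the order relations
  have hB2 : B.2 = 0 := by
    rcases hBC with ⟨-, h⟩ | h
    · exact h
    · simp [thetaPair, ZMod.val_zero] at h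
  have hCB : List.Lex (· < ·) (thetaWord s k A) B.1 := by
    rcases hBC with ⟨h, -⟩ | h
    · exact h
    · simp [thetaPair, ZMod.val_zero] at h
  have hBA : List.Lex (· < ·) B.1 A := by
    rcases hAB with ⟨h, -⟩ | h
    · exact h
    · rw [hB2] at h; simp [ZMod.val_zero] at h
  have hrot : ∀ d : ℕ, k ∣ d → ¬ List.Lex (· < ·) B.1 (B.1.rotate d) := by
    intro d hd hlex
    have hd0 : (d : ZMod k) = 0 := (ZMod.natCast_eq_zero_iff d k).2 hd
    exact hmax d (Or.inl ⟨hlex, by simp [rotPair, hd0]⟩)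
  clear hmax hAB hBC hB2
  -- structure of A
  set z := (A.reverse.takeWhile (fun a => a.val == 0)).length with hzdef
  have hrevlen : A.reverse.length = n := by simp [hA]
  have hzle : z ≤ n := by
    have := (List.takeWhile_prefix (l := A.reverse) (fun a : Fin s => a.val == 0)).length_le
    rw [hrevlen] at this
    omega
  have hzn : z < n := by
    rcases Nat.lt_or_ge z n with h | h
    · exact h
    · exfalso
      have hz : z = A.reverse.length := by rw [hrevlen]; omega
      have heq : A.reverse.takeWhile (fun a : Fin s => a.val == 0) = A.reverse :=
        (List.takeWhile_prefix _).eq_of_length (by rw [← hz, hzdef])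
      have hall := List.takeWhile_eq_self_iff.1 heq
      apply hA0
      refine List.eq_replicate_iff.2 ⟨hA, fun b hb => ?_⟩
      have := hall b (List.mem_reverse.2 hb)
      exact Fin.ext (by simpa using this)
  set i : ℕ := n - z with hidef
  have hi1 : 1 ≤ i := by omega
  have hin : i ≤ n := by omega
  have hAzero : ∀ u, i ≤ u → u < n → ∃ x : Fin s, A[u]? = some x ∧ x.val = 0 := by
    intro u hu1 hu2
    have h1 : A.reverse[n - 1 - u]? = A[u]? := by
      rw [List.getElem?_reverse (by omega : n - 1 - u < A.length)]
      congr 1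
      omega
    have hwz : n - 1 - u < (A.reverse.takeWhile (fun a : Fin s => a.val == 0)).length := by
      rw [← hzdef]; omega
    have h2 : A.reverse[n - 1 - u]? = (A.reverse.takeWhile (fun a : Fin s => a.val == 0))[n - 1 - u]? := by
      conv_lhs => rw [← List.takeWhile_append_dropWhile (p := fun a : Fin s => a.val == 0) (l := A.reverse)]
      rw [List.getElem?_append_left hwz]
    refine ⟨(A.reverse.takeWhile (fun a : Fin s => a.val == 0))[n - 1 - u]'hwz, ?_, ?_⟩
    · rw [← h1, h2, List.getElem?_eq_getElem hwz]
    · have hmem := List.getElem_mem hwz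
      have := List.mem_takeWhile_imp hmem
      simpa using this
  obtain ⟨a, hAia, ha0⟩ : ∃ a : Fin s, A[i-1]? = some a ∧ a.val ≠ 0 := by
    have hDlen : (A.reverse.takeWhile (fun a : Fin s => a.val == 0)).length
        + (A.reverse.dropWhile (fun a : Fin s => a.val == 0)).length = n := by
      have := congrArg List.length
        (List.takeWhile_append_dropWhile (p := fun a : Fin s => a.val == 0) (l := A.reverse))
      rw [List.length_append, hrevlen] at this
      exact this
    have hD0 : 0 < (A.reverse.dropWhile (fun a : Fin s => a.val == 0)).length := by
      rw [← hzdef] at hDlen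
      omega
    have h1 : A.reverse[z]? = A[i-1]? := by
      rw [List.getElem?_reverse (by omega : z < A.length)]
      congr 1
      omega
    have h2 : A.reverse[z]? = (A.reverse.dropWhile (fun a : Fin s => a.val == 0))[0]? := by
      conv_lhs => rw [← List.takeWhile_append_dropWhile (p := fun a : Fin s => a.val == 0) (l := A.reverse)]
      rw [List.getElem?_append_right (by rw [← hzdef])]
      congr 1
      rw [← hzdef]
      omega
    refine ⟨(A.reverse.dropWhile (fun a : Fin s => a.val == 0))[0]'hD0, ?_, ?_⟩
    · rw [← h1, h2, List.getElem?_eq_getElem hD0]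
    · have := List.dropWhile_get_zero_not (fun a : Fin s => a.val == 0) A.reverse hD0
      simpa using this
  have ha1 : 1 ≤ a.val := Nat.one_le_iff_ne_zero.2 ha0
  -- structure of C = θ A
  set j : ℕ := i + ((n - i) % k) with hjdef
  set q : ℕ := n / j with hqdef
  set r : ℕ := n - q * j with hrdef
  set blk : List (Fin s) := A.take (i-1) ++
      (⟨a.val - 1, Nat.lt_of_le_of_lt (Nat.sub_le _ _) a.isLt⟩ : Fin s) ::
      List.replicate (j - i)
        (⟨s - 1, Nat.sub_lt (Nat.lt_of_le_of_lt (Nat.zero_le a.val) a.isLt) Nat.one_pos⟩ : Fin s)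
    with hblkdef
  set C : List (Fin s) := thetaWord s k A with hCdef
  have hji : i ≤ j := by omega
  have hjn : j ≤ n := by
    have : (n - i) % k ≤ n - i := Nat.mod_le _ _
    omega
  have hj1 : 1 ≤ j := by omega
  have hq1 : 1 ≤ q := by
    rw [hqdef]; exact Nat.one_le_div_iff (by omega) |>.2 hjn
  have hqjn : q * j ≤ n := by rw [hqdef]; exact Nat.div_mul_le_self n j
  have hrmod : r = n % j := by
    have h := Nat.div_add_mod n j
    rw [← hqdef] at h
    have h2 : j * q = q * j := Nat.mul_comm _ _
    omega
  have hrj : r < j := by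
    rw [hrmod]; exact Nat.mod_lt _ (by omega)
  have hblklen : blk.length = j := by
    rw [hblkdef]
    simp [List.length_take, hA]
    omega
  have hC : C = (List.replicate q blk).flatten ++ A.take r := by
    rw [hCdef]
    simp only [thetaWord]
    rw [hA, ← hzdef, ← hidef, hAia]
  have hClen : C.length = n := by
    rw [hC, List.length_append, len_flatrep, hblklen, List.length_take, hA]
    omega
  -- pieces of C
  have hblk_lo : ∀ u, u < i-1 → blk[u]? = A[u]? := by
    intro u hu
    rw [hblkdef, List.getElem?_append_left (by simp [List.length_take, hA]; omega),
      List.getElem?_take_of_lt hu]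
  have hblk_a : blk[i-1]? = some ⟨a.val - 1, Nat.lt_of_le_of_lt (Nat.sub_le _ _) a.isLt⟩ := by
    have hlen : (A.take (i-1)).length = i - 1 := by simp [List.length_take, hA]; omega
    rw [hblkdef, List.getElem?_append_right (by omega), hlen, Nat.sub_self]
    simp
  have hblk_hi : ∀ u, i ≤ u → u < j →
      blk[u]? = some ⟨s - 1, by omega⟩ := by
    intro u hu1 hu2
    have hlen : (A.take (i-1)).length = i - 1 := by simp [List.length_take, hA]; omega
    rw [hblkdef, List.getElem?_append_right (by omega), hlen]
    have : u - (i-1) = (u - i) + 1 := by omega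
    rw [this, List.getElem?_cons_succ, List.getElem?_replicate_of_lt (by omega)]
  have hCblk : ∀ m t, m < q → t < j → C[m*j + t]? = blk[t]? := by
    intro m t hm ht
    have hlt : m*j + t < (List.replicate q blk).flatten.length := by
      rw [len_flatrep, hblklen]
      calc m*j + t < m*j + j := by omega
      _ = (m+1)*j := by ring
      _ ≤ q*j := Nat.mul_le_mul_right _ (by omega)
    rw [hC, List.getElem?_append_left hlt, ← hblklen]
    exact flatrep_getElem blk q m t hm (by rw [hblklen]; exact ht)
  have hCtail : ∀ t, t < r → C[q*j + t]? = A[t]? := by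
    intro t ht
    have hlen : (List.replicate q blk).flatten.length = q*j := by rw [len_flatrep, hblklen]
    rw [hC, List.getElem?_append_right (by omega), hlen, Nat.add_sub_cancel_left,
      List.getElem?_take_of_lt ht]
  -- lex characterizations
  obtain ⟨p, hagp, c, b', hCp, hBp, hcb⟩ := (lex_iff C B.1 (by rw [hClen, hBlen])).1 hCB
  obtain ⟨d, hagd, bd, ad, hBd, hAd, hba⟩ := (lex_iff B.1 A (by rw [hBlen, hA])).1 hBA
  have hcb' : c.val < b'.val := hcb
  have hba' : bd.val < ad.val := hba
  have hpn : p < n := by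
    by_contra h
    rw [List.getElem?_eq_none (by omega : B.1.length ≤ p)] at hBp
    cases hBp
  have hdn : d < n := by
    by_contra h
    rw [List.getElem?_eq_none (by omega : A.length ≤ d)] at hAd
    cases hAd
  have hCA_blk : ∀ u, u < j → C[u]? = blk[u]? := by
    intro u hu
    have := hCblk 0 u hq1 hu
    simpa using this
  have hBAlo : ∀ u, u < i - 1 → u < p → B.1[u]? = A[u]? := by
    intro u h1 h2
    rw [← hagp u h2, hCA_blk u (by omega), hblk_lo u h1]
  -- the first difference of B with A, and of C with B, are at position ≥ i-1
  have hpi : i - 1 ≤ p := by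
    by_contra h
    push_neg at h
    rcases Nat.lt_or_ge p d with hpd | hdp
    · have h1 : B.1[p]? = A[p]? := hagd p hpd
      have h2 : C[p]? = A[p]? := by rw [hCA_blk p (by omega), hblk_lo p (by omega)]
      have : (some c : Option (Fin s)) = some b' := by rw [← hCp, h2, ← h1, hBp]
      have := Option.some.inj this
      omega
    · rcases Nat.lt_or_ge d p with hdp' | hpd'
      · have h1 : B.1[d]? = C[d]? := (hagp d hdp').symm
        have h2 : C[d]? = A[d]? := by rw [hCA_blk d (by omega), hblk_lo d (by omega)]
        have : (some bd : Option (Fin s)) = some ad := by rw [← hBd, h1, h2, hAd]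
        have := Option.some.inj this
        omega
      · have hpd2 : p = d := by omega
        have h2 : C[p]? = A[p]? := by rw [hCA_blk p (by omega), hblk_lo p (by omega)]
        have e1 : c = ad := by
          have : (some c : Option (Fin s)) = some ad := by rw [← hCp, h2, hpd2, hAd]
          exact Option.some.inj this
        have e2 : b' = bd := by
          have : (some b' : Option (Fin s)) = some bd := by rw [← hBp, hpd2, hBd]
          exact Option.some.inj this
        rw [e1, e2] at hcb'
        omega
  have hdi : i - 1 ≤ d := by
    by_contra h
    push_neg at h
    have h1 : B.1[d]? = A[d]? := hBAlo d h (by omega)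
    have : (some bd : Option (Fin s)) = some ad := by rw [← hBd, h1, hAd]
    have := Option.some.inj this
    omega
  have hdeq : d = i - 1 := by
    by_contra h
    have hd_ge : i ≤ d := by omega
    obtain ⟨x, hx, hx0⟩ := hAzero d hd_ge hdn
    have : ad = x := Option.some.inj (by rw [← hAd, hx])
    omega
  have had : ad = a := by
    have : (some ad : Option (Fin s)) = some a := by rw [← hAd, hdeq, hAia]
    exact Option.some.inj this
  have hbda : bd.val < a.val := by rw [had] at hba'; omega
  have hpge : i ≤ p := by
    rcases Nat.lt_or_ge p i with h | h
    · exfalso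
      have hp : p = i - 1 := by omega
      have e1 : c.val = a.val - 1 := by
        have : (some c : Option (Fin s)) = some ⟨a.val - 1, Nat.lt_of_le_of_lt (Nat.sub_le _ _) a.isLt⟩ := by
          rw [← hCp, hp, hCA_blk (i-1) (by omega), hblk_a]
        have := Option.some.inj this
        rw [this]
      have e2 : b' = bd := by
        have : (some b' : Option (Fin s)) = some bd := by rw [← hBp, hp, ← hdeq, hBd]
        exact Option.some.inj this
      rw [e2] at hcb'
      omega
    · exact h
  -- decompose p = m*j + t
  obtain ⟨m, t, hptj, htj⟩ : ∃ m t : ℕ, p = m * j + t ∧ t < j := by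
    refine ⟨p / j, p % j, ?_, Nat.mod_lt _ (by omega)⟩
    have h := Nat.div_add_mod p j
    have h2 : j * (p / j) = (p / j) * j := Nat.mul_comm _ _
    omega
  have hnqjr : n = q * j + r := by omega
  -- auxiliary divisibility facts
  have hkj_of : k ∣ n → k ∣ j := by
    intro hkn
    have h2 : (i + (n - i) % k) % k = (i + (n - i)) % k := by
      conv_lhs => rw [Nat.add_mod]
      conv_rhs => rw [Nat.add_mod]
      rw [Nat.mod_mod_of_dvd _ (dvd_refl k)]
    have h3 : j % k = 0 := by
      rw [hjdef, h2, show i + (n - i) = n by omega]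
      obtain ⟨c', rfl⟩ := hkn
      simp [Nat.mul_mod_right]
    exact Nat.dvd_of_mod_eq_zero h3
  have hkn_of : 1 ≤ m → k ∣ n := by
    intro hm1
    rcases hdvd with h | h
    · exact h
    · exfalso
      have hnk : n ≤ k := Nat.le_of_dvd hk h
      have hjn' : j = n := by rw [hjdef, Nat.mod_eq_of_lt (by omega)]; omega
      have hjm : j ≤ m * j := Nat.le_mul_of_pos_left j (by omega)
      omega
  have hri : k ∣ n → r + 1 ≤ i := by
    intro hkn
    have hkj := hkj_of hkn
    have hkr : k ∣ r := by
      rw [hrdef]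
      exact Nat.dvd_sub hkn (hkj.mul_left q)
    rcases Nat.lt_or_ge r i with h | h
    · omega
    · exfalso
      have h1 : k ∣ (j - r) := Nat.dvd_sub hkj hkr
      have h2 : k ≤ j - r := Nat.le_of_dvd (by omega) h1
      have hb : (n - i) % k < k := Nat.mod_lt _ (by omega)
      omega
  -- the rotation argument
  have hfinish : ∀ (hm1 : 1 ≤ m) (hti : t ≤ i - 1) (hkj : k ∣ j)
      (hCfrom : ∀ u, u ≤ t → C[m*j + u]? = blk[u]?), False := by
    intro hm1 hti hkj hCfrom
    have hjm : j ≤ m * j := Nat.le_mul_of_pos_left j (by omega)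
    apply hrot (m*j) (hkj.mul_left m)
    refine (lex_iff B.1 (B.1.rotate (m*j)) (by rw [List.length_rotate])).2 ?_
    refine ⟨t, ?_, c, b', ?_, ?_, hcb⟩
    · intro u hu
      have hrotu : (B.1.rotate (m*j))[u]? = B.1[m*j + u]? := by
        rw [List.getElem?_rotate (by rw [hBlen]; omega : u < B.1.length), hBlen,
          Nat.mod_eq_of_lt (by omega : u + m*j < n)]
        congr 1
        omega
      rw [hrotu, ← hagp u (by omega : u < p), ← hagp (m*j+u) (by omega : m*j+u < p),
        hCfrom u (by omega), hCA_blk u (by omega)]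
    · rw [← hagp t (by omega : t < p), hCA_blk t (by omega : t < j), ← hCfrom t le_rfl, ← hptj]
      exact hCp
    · rw [List.getElem?_rotate (by rw [hBlen]; omega : t < B.1.length), hBlen,
        Nat.mod_eq_of_lt (by omega : t + m*j < n), show t + m*j = p by omega]
      exact hBp
  -- main case analysis on the location of p
  have hmcase : m < q ∨ (m = q ∧ t < r) := by
    rcases Nat.lt_or_ge m q with h | h
    · exact Or.inl h
    · right
      have hnot : ¬ q + 1 ≤ m := by
        intro hgt
        have h1 : (q+1) * j ≤ m * j := Nat.mul_le_mul_right _ hgt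
        rw [Nat.add_mul, Nat.one_mul] at h1
        omega
      have hm : m = q := by omega
      refine ⟨hm, ?_⟩
      rw [hm] at hptj
      omega
  rcases hmcase with hmq | ⟨hmq, htr⟩
  · rcases Nat.lt_or_ge t i with hti | hti
    · have hm1 : 1 ≤ m := by
        by_contra h
        have hm0 : m = 0 := by omega
        rw [hm0, Nat.zero_mul, Nat.zero_add] at hptj
        omega
      exact hfinish hm1 (by omega) (hkj_of (hkn_of hm1))
        (fun u hu => hCblk m u hmq (by omega))
    · have h1 : C[p]? = blk[t]? := by rw [hptj]; exact hCblk m t hmq htj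
      have h2 : c.val = s - 1 := by
        have : (some c : Option (Fin s)) = some (⟨s-1, by omega⟩ : Fin s) := by
          rw [← hCp, h1, hblk_hi t hti htj]
        have := Option.some.inj this
        rw [this]
      have := b'.isLt
      omega
  · have hkn : k ∣ n := by
      rcases hdvd with h | h
      · exact h
      · exfalso
        have hnk : n ≤ k := Nat.le_of_dvd hk h
        have hjn' : j = n := by rw [hjdef, Nat.mod_eq_of_lt (by omega)]; omega
        have hq : q = 1 := by rw [hqdef, hjn']; exact Nat.div_self (by omega)
        have hr0 : r = 0 := by rw [hrdef, hq, hjn']; omega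
        omega
    have hir := hri hkn
    have hm1 : 1 ≤ m := by omega
    refine hfinish hm1 (by omega) (hkj_of hkn) (fun u hu => ?_)
    rw [hmq, hCtail u (by omega), hblk_lo u (by omega)]
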